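/- Let G be a finite non-solvable group. Then every x ∈ G with x ∉ Sol(G) satisfies deg(x) > 5, where deg(x) is the number of elements y ∈ G such that ⟨x,y⟩ is not solvable; that is, the minimum degree of the induced non-solvable graph on G ∖ Sol(G) is greater than 5. -/

import Mathlib

open Subgroup

section Aux

variable {G : Type*} [Group G]

/-- Subgroup generated by a subset of a cyclic subgroup is solvable. -/
lemma comm_solv (w : G) (S : Set G) (hS : S ⊆ (zpowers w : Set G)) :
    IsSolvable ↥(closure S) := by
  have h : closure S ≤ zpowers w := (closure_le _).2 hS
  apply isSolvable_of_comm
  rintro ⟨a, ha⟩ ⟨b, hb⟩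
  obtain ⟨m, hm⟩ := mem_zpowers_iff.mp (h ha)
  obtain ⟨k, hk⟩ := mem_zpowers_iff.mp (h hb)
  apply Subtype.ext
  show a * b = b * a
  rw [← hm, ← hk, ← zpow_add, ← zpow_add, add_comm]

/-- If `c` almost-normalizes `⟨w⟩`, then `⟨w, c⟩` is solvable. -/
lemma solv_aux (w c : G) (h1 : c * w * c⁻¹ ∈ zpowers w) (h2 : c⁻¹ * w * c ∈ zpowers w) :
    IsSolvable ↥(closure ({w, c} : Set G)) := by
  set H := closure ({w, c} : Set G) with hH
  have hwH : w ∈ H := subset_closure (by simp)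
  have hcH : c ∈ H := subset_closure (by simp)
  have hle : zpowers w ≤ H := (zpowers_le).mpr hwH
  have hcN : c ∈ normalizer (zpowers w : Set G) := by
    rw [mem_normalizer_iff]
    intro h
    constructor
    · intro hh
      obtain ⟨k, hk⟩ := mem_zpowers_iff.mp hh
      have : c * h * c⁻¹ = (c * w * c⁻¹) ^ k := by rw [conj_zpow, hk]
      rw [this]
      exact zpow_mem h1 k
    · intro hh
      obtain ⟨k, hk⟩ := mem_zpowers_iff.mp hh
      have : h = (c⁻¹ * w * c) ^ k := by
        rw [show c⁻¹ * w * c = c⁻¹ * w * c⁻¹⁻¹ by rw [inv_inv], conj_zpow, hk, inv_inv]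
        group
      rw [this]
      exact zpow_mem h2 k
  have hHN : H ≤ normalizer (zpowers w : Set G) := by
    rw [hH]
    apply (closure_le _).2
    rw [Set.insert_subset_iff, Set.singleton_subset_iff]
    exact ⟨le_normalizer (mem_zpowers w), hcN⟩
  haveI hnorm : ((zpowers w).subgroupOf H).Normal := by
    rw [normal_subgroupOf_iff hle]
    intro h k hh hk
    exact (mem_normalizer_iff.mp (hHN hk) h).mp hh
  set N' := (zpowers w).subgroupOf H with hN'
  set π := QuotientGroup.mk' N' with hπ
  have key : ∀ g : H, π g ∈ zpowers (π ⟨c, hcH⟩) := by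
    rintro ⟨g, hg⟩
    induction hg using closure_induction with
    | mem y hy =>
      rcases Set.mem_insert_iff.mp hy with h | h
      · have h1' : ∀ hh : y ∈ H, π ⟨y, hh⟩ = 1 := by
          intro hh
          rw [hπ, QuotientGroup.mk'_apply, QuotientGroup.eq_one_iff]
          exact mem_subgroupOf.mpr (h ▸ mem_zpowers w)
        rw [h1']
        exact one_mem _
      · have h1' : (⟨y, subset_closure hy⟩ : H) = ⟨c, hcH⟩ :=
          Subtype.ext (Set.mem_singleton_iff.mp h)
        rw [h1']
        exact mem_zpowers _
    | one =>
      have : (⟨1, one_mem H⟩ : H) = 1 := rfl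
      rw [this, map_one]
      exact one_mem _
    | mul a b ha hb iha ihb =>
      have : (⟨a * b, mul_mem ha hb⟩ : H) = ⟨a, ha⟩ * ⟨b, hb⟩ := rfl
      rw [this, map_mul]
      exact mul_mem iha ihb
    | inv a ha iha =>
      have : (⟨a⁻¹, inv_mem ha⟩ : H) = (⟨a, ha⟩ : H)⁻¹ := rfl
      rw [this, map_inv]
      exact inv_mem iha
  haveI hQsolv : IsSolvable (H ⧸ N') := by
    apply isSolvable_of_comm
    intro a b
    obtain ⟨a, rfl⟩ := QuotientGroup.mk'_surjective N' a
    obtain ⟨b, rfl⟩ := QuotientGroup.mk'_surjective N' b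
    obtain ⟨m, hm⟩ := mem_zpowers_iff.mp (key a)
    obtain ⟨k, hk⟩ := mem_zpowers_iff.mp (key b)
    rw [← hm, ← hk, ← zpow_add, ← zpow_add, add_comm]
  haveI hN'solv : IsSolvable N' := by
    apply isSolvable_of_comm
    rintro ⟨a, ha⟩ ⟨b, hb⟩
    obtain ⟨m, hm⟩ := mem_zpowers_iff.mp (mem_subgroupOf.mp ha)
    obtain ⟨k, hk⟩ := mem_zpowers_iff.mp (mem_subgroupOf.mp hb)
    apply Subtype.ext
    apply Subtype.ext
    show (a : G) * b = (b : G) * a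
    rw [← hm, ← hk, ← zpow_add, ← zpow_add, add_comm]
  exact solvable_of_ker_le_range N'.subtype π (hG' := hN'solv) (hG'' := hQsolv)
    (by rw [hπ, QuotientGroup.ker_mk', Subgroup.range_subtype])

lemma closure_pair_eq (x z u : G) (hu : u ∈ closure ({x, z} : Set G))
    (hz : z ∈ closure ({x, u} : Set G)) :
    closure ({x, u} : Set G) = closure ({x, z} : Set G) := by
  apply le_antisymm
  · apply (closure_le _).2
    rw [Set.insert_subset_iff, Set.singleton_subset_iff]
    exact ⟨subset_closure (by simp), hu⟩
  · apply (closure_le _).2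
    rw [Set.insert_subset_iff, Set.singleton_subset_iff]
    exact ⟨subset_closure (by simp), hz⟩

lemma closT (x z u v : G) (hu : u ∈ zpowers x) (hv : v ∈ zpowers x) :
    closure ({x, u * z * v} : Set G) = closure ({x, z} : Set G) := by
  have hx1 : x ∈ closure ({x, z} : Set G) := subset_closure (by simp)
  have hx2 : x ∈ closure ({x, u * z * v} : Set G) := subset_closure (by simp)
  have hu1 : u ∈ closure ({x, z} : Set G) := zpowers_le.mpr hx1 hu
  have hv1 : v ∈ closure ({x, z} : Set G) := zpowers_le.mpr hx1 hv
  have hu2 : u ∈ closure ({x, u * z * v} : Set G) := zpowers_le.mpr hx2 hu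
  have hv2 : v ∈ closure ({x, u * z * v} : Set G) := zpowers_le.mpr hx2 hv
  apply closure_pair_eq
  · exact mul_mem (mul_mem hu1 (subset_closure (by simp))) hv1
  · have hm : u⁻¹ * (u * z * v) * v⁻¹ ∈ closure ({x, u * z * v} : Set G) :=
      mul_mem (mul_mem (inv_mem hu2) (subset_closure (by simp))) (inv_mem hv2)
    rwa [show u⁻¹ * (u * z * v) * v⁻¹ = z by group] at hm

lemma closInv (x z : G) :
    closure ({x, z⁻¹} : Set G) = closure ({x, z} : Set G) :=
  closure_pair_eq x z z⁻¹ (inv_mem (subset_closure (by simp)))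
    (by simpa using inv_mem (subset_closure (show z⁻¹ ∈ ({x, z⁻¹} : Set G) by simp)))

lemma cross_lemma (x z u v : G) (hu : u ∈ zpowers x) (hv : v ∈ zpowers x)
    (he : u * z = v * (z * x)) : z * x * z⁻¹ ∈ zpowers x := by
  have h : z * x * z⁻¹ = v⁻¹ * u := by
    calc z * x * z⁻¹ = v⁻¹ * (v * (z * x)) * z⁻¹ := by group
    _ = v⁻¹ * (u * z) * z⁻¹ := by rw [he]
    _ = v⁻¹ * u := by group
  rw [h]
  exact mul_mem (inv_mem hv) hu

end Aux

section Count

variable {G : Type*} [Group G] [Finite G]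

lemma count_lemma (x z : G) (hz : ¬ IsSolvable ↥(closure ({x, z} : Set G)))
    (hk : z * x * z⁻¹ ∉ zpowers x) :
    5 < Nat.card {y : G | ¬ IsSolvable ↥(Subgroup.closure ({x, y} : Set G))} := by
  classical
  set T : Set G := {y : G | ¬ IsSolvable ↥(Subgroup.closure ({x, y} : Set G))} with hT
  have hx1 : x ≠ 1 := by
    rintro rfl
    exact hk (by simpa using one_mem (zpowers (1 : G)))
  have hcomm : ¬ (x * z = z * x) := by
    intro h
    apply hk
    have : z * x * z⁻¹ = x := by rw [← h]; group
    rw [this]; exact mem_zpowers x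
  have memT : ∀ u v : G, u ∈ zpowers x → v ∈ zpowers x → u * z * v ∈ T := by
    intro u v hu hv
    show ¬ IsSolvable _
    rw [closT x z u v hu hv]
    exact hz
  have m1 : (1 : G) ∈ zpowers x := one_mem _
  have mx : x ∈ zpowers x := mem_zpowers x
  have mxx : x * x ∈ zpowers x := mul_mem mx mx
  have mz : z ∈ zpowers z := mem_zpowers z
  have mzi : z⁻¹ ∈ zpowers z := inv_mem (mem_zpowers z)
  have conclude : ∀ s : Finset G, (↑s : Set G) ⊆ T → s.card = 6 → 5 < Nat.card T := by
    intro s hsub hcard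
    rw [Nat.card_coe_set_eq]
    calc 5 < 6 := by norm_num
    _ = (↑s : Set G).ncard := by rw [Set.ncard_coe_finset, hcard]
    _ ≤ T.ncard := Set.ncard_le_ncard hsub (Set.toFinite T)
  by_cases h2 : x * x = 1
  · -- x has order 2
    have hxinv : x⁻¹ = x := inv_eq_of_mul_eq_one_right h2
    have hxz : x ∉ zpowers z := by
      intro hmem
      apply hz
      apply comm_solv z
      rw [Set.insert_subset_iff, Set.singleton_subset_iff]
      exact ⟨hmem, mz⟩
    have hzz : z * z ≠ 1 := by
      intro hzz
      apply hz
      have hzinv : z⁻¹ = z := inv_eq_of_mul_eq_one_right hzz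
      have hcl : closure ({x * z, x} : Set G) = closure ({x, z} : Set G) := by
        apply le_antisymm
        · apply (closure_le _).2
          rw [Set.insert_subset_iff, Set.singleton_subset_iff]
          exact ⟨mul_mem (subset_closure (by simp)) (subset_closure (by simp)),
            subset_closure (by simp)⟩
        · apply (closure_le _).2
          rw [Set.insert_subset_iff, Set.singleton_subset_iff]
          refine ⟨subset_closure (by simp), ?_⟩
          have hm : x⁻¹ * (x * z) ∈ closure ({x * z, x} : Set G) :=
            mul_mem (inv_mem (subset_closure (by simp))) (subset_closure (by simp))
          rwa [show x⁻¹ * (x * z) = z by group] at hm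
      rw [← hcl]
      have key : x * (x * z) * x⁻¹ = (x * z)⁻¹ := by
        rw [mul_inv_rev, hzinv, hxinv]
        calc x * (x * z) * x = (x * x) * (z * x) := by group
        _ = z * x := by rw [h2, one_mul]
      apply solv_aux
      · rw [key]; exact inv_mem (mem_zpowers _)
      · have key2 : x⁻¹ * (x * z) * x = (x * z)⁻¹ := by
          calc x⁻¹ * (x * z) * x = x * (x * z) * x⁻¹ := by rw [hxinv]
          _ = (x * z)⁻¹ := key
        rw [key2]; exact inv_mem (mem_zpowers _)
    have hflip : ¬ (x * z * x = z⁻¹) := by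
      intro hflip
      apply hz
      rw [show ({x, z} : Set G) = {z, x} from Set.pair_comm x z]
      apply solv_aux
      · have : x * z * x⁻¹ = z⁻¹ := by rw [hxinv]; exact hflip
        rw [this]; exact mzi
      · have : x⁻¹ * z * x = z⁻¹ := by
          rw [hxinv, ← hflip]
        rw [this]; exact mzi
    -- six elements: z, x*z, z*x, x*z*x, z⁻¹, x*z⁻¹
    have t1 : z ∈ T := by simpa using memT 1 1 m1 m1
    have t2 : x * z ∈ T := by simpa using memT x 1 mx m1
    have t3 : z * x ∈ T := by simpa using memT 1 x m1 mx
    have t4 : x * z * x ∈ T := memT x x mx mx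
    have t5 : z⁻¹ ∈ T := by
      show ¬ IsSolvable _
      rw [closInv]
      exact hz
    have t6 : x * z⁻¹ ∈ T := by
      show ¬ IsSolvable _
      have : closure ({x, x * z⁻¹} : Set G) = closure ({x, z⁻¹} : Set G) := by
        simpa using closT x z⁻¹ x 1 mx m1
      rw [this, closInv]
      exact hz
    have d12 : z ≠ x * z := fun h => hx1 (by
      have : (1 : G) * z = x * z := by simpa using h
      exact (mul_right_cancel this).symm)
    have d13 : z ≠ z * x := fun h => hx1 (mul_left_cancel (a := z) (by simpa using h.symm))
    have d14 : z ≠ x * z * x := fun h => hcomm (by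
      have : z * x = x * z := by
        calc z * x = x * z * x * x := by rw [← h]
        _ = x * z * (x * x) := by group
        _ = x * z := by rw [h2, mul_one]
      exact this.symm)
    have d15 : z ≠ z⁻¹ := fun h => hzz (by
      have : z * z = z * z⁻¹ := by rw [← h]
      rw [this, mul_inv_cancel])
    have d16 : z ≠ x * z⁻¹ := fun h => hxz (by
      have : x = z * z := by
        calc x = x * z⁻¹ * z := by group
        _ = z * z := by rw [← h]
      rw [this]; exact mul_mem mz mz)
    have d23 : x * z ≠ z * x := fun h => hcomm h
    have d24 : x * z ≠ x * z * x := fun h => hx1 (mul_left_cancel (a := x * z)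
      (by simpa using h.symm))
    have d25 : x * z ≠ z⁻¹ := fun h => hxz (by
      have : x = z⁻¹ * z⁻¹ := by
        calc x = x * z * z⁻¹ := by group
        _ = z⁻¹ * z⁻¹ := by rw [h]
      rw [this]; exact mul_mem mzi mzi)
    have d26 : x * z ≠ x * z⁻¹ := fun h => hzz (by
      have hzzi : z = z⁻¹ := mul_left_cancel (a := x) h
      have : z * z = z * z⁻¹ := by rw [← hzzi]
      rw [this, mul_inv_cancel])
    have d34 : z * x ≠ x * z * x := fun h => hx1 (by
      have : (1 : G) * (z * x) = x * (z * x) := by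
        calc (1 : G) * (z * x) = z * x := one_mul _
        _ = x * z * x := h
        _ = x * (z * x) := by group
      exact (mul_right_cancel this).symm)
    have d35 : z * x ≠ z⁻¹ := fun h => hxz (by
      have : x = z⁻¹ * z⁻¹ := by
        calc x = z⁻¹ * (z * x) := by group
        _ = z⁻¹ * z⁻¹ := by rw [h]
      rw [this]; exact mul_mem mzi mzi)
    have d36 : z * x ≠ x * z⁻¹ := fun h => hflip (by
      calc x * z * x = x * (z * x) := by group
      _ = x * (x * z⁻¹) := by rw [h]
      _ = (x * x) * z⁻¹ := by group
      _ = z⁻¹ := by rw [h2, one_mul])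
    have d45 : x * z * x ≠ z⁻¹ := fun h => hflip h
    have d46 : x * z * x ≠ x * z⁻¹ := fun h => hxz (by
      have h' : z * x = z⁻¹ := mul_left_cancel (a := x) (by
        calc x * (z * x) = x * z * x := by group
        _ = x * z⁻¹ := h)
      have : x = z⁻¹ * z⁻¹ := by
        calc x = z⁻¹ * (z * x) := by group
        _ = z⁻¹ * z⁻¹ := by rw [h']
      rw [this]; exact mul_mem mzi mzi)
    have d56 : z⁻¹ ≠ x * z⁻¹ := fun h => hx1 (by
      have : (1 : G) * z⁻¹ = x * z⁻¹ := by simpa using h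
      exact (mul_right_cancel this).symm)
    apply conclude {z, x * z, z * x, x * z * x, z⁻¹, x * z⁻¹}
    · intro y hy
      simp only [Finset.coe_insert, Set.mem_insert_iff, Finset.coe_singleton,
        Set.mem_singleton_iff] at hy
      rcases hy with rfl | rfl | rfl | rfl | rfl | rfl
      exacts [t1, t2, t3, t4, t5, t6]
    · rw [Finset.card_insert_of_notMem (by simp [d12, d13, d14, d15, d16]),
        Finset.card_insert_of_notMem (by simp [d23, d24, d25, d26]),
        Finset.card_insert_of_notMem (by simp [d34, d35, d36]),
        Finset.card_insert_of_notMem (by simp [d45, d46]),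
        Finset.card_insert_of_notMem (by simp [d56]),
        Finset.card_singleton]
  · -- x has order ≥ 3
    have hx2 : x ≠ x * x := fun h => hx1 (mul_left_cancel (a := x) (by simpa using h.symm))
    have t1 : z ∈ T := by simpa using memT 1 1 m1 m1
    have t2 : x * z ∈ T := by simpa using memT x 1 mx m1
    have t3 : x * x * z ∈ T := by simpa using memT (x * x) 1 mxx m1
    have t4 : z * x ∈ T := by simpa using memT 1 x m1 mx
    have t5 : x * z * x ∈ T := memT x x mx mx
    have t6 : x * x * z * x ∈ T := memT (x * x) x mxx mx
    have cross : ∀ u v : G, u ∈ zpowers x → v ∈ zpowers x → u * z ≠ v * (z * x) := by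
      intro u v hu hv h
      exact hk (cross_lemma x z u v hu hv h)
    have d12 : z ≠ x * z := fun h => hx1 (by
      have : (1 : G) * z = x * z := by simpa using h
      exact (mul_right_cancel this).symm)
    have d13 : z ≠ x * x * z := fun h => h2 (by
      have : (1 : G) * z = (x * x) * z := by simpa using h
      exact (mul_right_cancel this).symm)
    have d23 : x * z ≠ x * x * z := fun h => hx2 (mul_right_cancel (b := z) h)
    have d45 : z * x ≠ x * z * x := fun h => hx1 (by
      have : (1 : G) * (z * x) = x * (z * x) := by
        calc (1 : G) * (z * x) = z * x := one_mul _
        _ = x * z * x := h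
        _ = x * (z * x) := by group
      exact (mul_right_cancel this).symm)
    have d46 : z * x ≠ x * x * z * x := fun h => h2 (by
      have : (1 : G) * (z * x) = (x * x) * (z * x) := by
        calc (1 : G) * (z * x) = z * x := one_mul _
        _ = x * x * z * x := h
        _ = (x * x) * (z * x) := by group
      exact (mul_right_cancel this).symm)
    have d56 : x * z * x ≠ x * x * z * x := fun h => hx2 (by
      have h' : x * (z * x) = (x * x) * (z * x) := by
        rw [← mul_assoc, h]; group
      exact mul_right_cancel h')
    have d14 : z ≠ z * x := fun h => cross 1 1 m1 m1 (by
      rw [one_mul, one_mul]; exact h)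
    have d15 : z ≠ x * z * x := fun h => cross 1 x m1 mx (by
      rw [one_mul, ← mul_assoc]; exact h)
    have d16 : z ≠ x * x * z * x := fun h => cross 1 (x * x) m1 mxx (by
      rw [one_mul, ← mul_assoc]; exact h)
    have d24 : x * z ≠ z * x := fun h => cross x 1 mx m1 (by
      rw [one_mul]; exact h)
    have d25 : x * z ≠ x * z * x := fun h => cross x x mx mx (by
      rw [← mul_assoc]; exact h)
    have d26 : x * z ≠ x * x * z * x := fun h => cross x (x * x) mx mxx (by
      rw [← mul_assoc]; exact h)
    have d34 : x * x * z ≠ z * x := fun h => cross (x * x) 1 mxx m1 (by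
      rw [one_mul]; exact h)
    have d35 : x * x * z ≠ x * z * x := fun h => cross (x * x) x mxx mx (by
      rw [← mul_assoc]; exact h)
    have d36 : x * x * z ≠ x * x * z * x := fun h => cross (x * x) (x * x) mxx mxx (by
      rw [← mul_assoc]; exact h)
    apply conclude {z, x * z, x * x * z, z * x, x * z * x, x * x * z * x}
    · intro y hy
      simp only [Finset.coe_insert, Set.mem_insert_iff, Finset.coe_singleton,
        Set.mem_singleton_iff] at hy
      rcases hy with rfl | rfl | rfl | rfl | rfl | rfl
      exacts [t1, t2, t3, t4, t5, t6]
    · rw [Finset.card_insert_of_notMem (by simp [d12, d13, d14, d15, d16]),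
        Finset.card_insert_of_notMem (by simp [d23, d24, d25, d26]),
        Finset.card_insert_of_notMem (by simp [d34, d35, d36]),
        Finset.card_insert_of_notMem (by simp [d45, d46]),
        Finset.card_insert_of_notMem (by simp [d56]),
        Finset.card_singleton]

end Count

/-- Let `G` be a finite non-solvable group. Then every `x ∉ Sol(G)` satisfies
`deg(x) > 5`, i.e. the minimum degree of the induced non-solvable graph on
`G \ Sol(G)` is greater than `5`. -/
theorem five_lt_degree (G : Type*) [Group G] [Finite G]
    (hG : ¬ IsSolvable G) (x : G)
    (hx : ¬ (∀ z : G, IsSolvable ↥(Subgroup.closure ({x, z} : Set G)))) :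
    5 < Nat.card {y : G | ¬ IsSolvable ↥(Subgroup.closure ({x, y} : Set G))} := by
  push_neg at hx
  obtain ⟨z, hz⟩ := hx
  by_cases h1 : z * x * z⁻¹ ∈ zpowers x
  · by_cases h2 : z⁻¹ * x * (z⁻¹)⁻¹ ∈ zpowers x
    · exfalso
      apply hz
      apply solv_aux
      · exact h1
      · rwa [inv_inv] at h2
    · apply count_lemma x z⁻¹ _ h2
      rw [closInv]
      exact hz
  · exact count_lemma x z hz h1
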